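/- Decomposition lemma: for every derivation tree T ∈ Trees(G), the decomposition d(T) = (T', S) satisfies: (1) T' is a simple derivation tree in Trees(G); (2) every element of S is a simple adjunct tree; (3) T can be obtained from T' by adjoining each element of S at least once (in particular T ∈ Adj⁺(T', S) ⊆ Trees(G)). -/

import Mathlib

/-- Trees whose internal nodes are labeled by nonterminals in `V`
and whose leaves are labeled by elements of `L`. -/
inductive PTree (V L : Type) : Type
  | leaf : L → PTree V L
  | node : V → List (PTree V L) → PTree V L

namespace PTree

variable {V A L : Type}

/-- Leaf alphabet for contexts/adjunct trees: a letter-or-ε leaf, or the hole. -/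
abbrev Aug (A : Type) := Option A ⊕ Unit

/-- The root label of a tree: a nonterminal or a leaf label. -/
def rootLabel : PTree V L → V ⊕ L
  | .leaf a => .inr a
  | .node X _ => .inl X

/-- Set of nonterminals occurring in a tree. -/
def ntSet : PTree V L → Set V
  | .leaf _ => ∅
  | .node X ts => insert X ((ts.attach.map (fun ⟨t, _⟩ => ntSet t)).foldr (· ∪ ·) ∅)

/-- A tree is simple if no nonterminal occurs twice on a root-to-leaf path. -/
def Simple : PTree V L → Prop
  | .leaf _ => True
  | .node X ts => ∀ t ∈ ts, X ∉ ntSet t ∧ Simple t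

/-- Number of holes in a context / adjunct tree. -/
def holes : PTree V (Aug A) → ℕ
  | .leaf (.inr _) => 1
  | .leaf (.inl _) => 0
  | .node _ ts => (ts.attach.map (fun ⟨t, _⟩ => holes t)).sum

/-- Substitute the tree `T` for every hole. -/
def subst (T : PTree V (Option A)) : PTree V (Aug A) → PTree V (Option A)
  | .leaf (.inl a) => .leaf a
  | .leaf (.inr _) => T
  | .node X ts => .node X (ts.attach.map (fun ⟨t, _⟩ => subst T t))

/-- Embed a `(V,A)`-tree into trees with holes (no holes created). -/
def toAug : PTree V (Option A) → PTree V (Aug A)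
  | .leaf a => .leaf (.inl a)
  | .node X ts => .node X (ts.attach.map (fun ⟨t, _⟩ => toAug t))

/-- Yield of a `(V,A)`-tree. -/
def yield : PTree V (Option A) → List A
  | .leaf none => []
  | .leaf (some a) => [a]
  | .node _ ts => (ts.attach.map (fun ⟨t, _⟩ => yield t)).flatten

/-- Yield of a context / adjunct tree, holes contributing `ε`. -/
def yieldA : PTree V (Aug A) → List A
  | .leaf (.inl none) => []
  | .leaf (.inl (some a)) => [a]
  | .leaf (.inr _) => []
  | .node _ ts => (ts.attach.map (fun ⟨t, _⟩ => yieldA t)).flatten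

/-- Height of a tree. -/
def height : PTree V L → ℕ
  | .leaf _ => 0
  | .node _ ts => (ts.attach.map (fun ⟨t, _⟩ => height t)).foldr max 0 + 1

/-- Size (number of nodes) of a tree. -/
def tsize : PTree V L → ℕ
  | .leaf _ => 1
  | .node _ ts => (ts.attach.map (fun ⟨t, _⟩ => tsize t)).sum + 1

end PTree

open PTree

/-- A context-free grammar over `A` with nonterminals `V`:
a finite set of rules `D ⊆ V × (V ∪ A ∪ {ε})⁺` and a start symbol. -/
structure CFG (V A : Type) where
  rules : Set (V × List (V ⊕ Option A))
  rules_fin : rules.Finite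
  start : V

variable {V A : Type}

/-- A tree is a valid derivation w.r.t. the rules `D`. -/
inductive IsDeriv (D : Set (V × List (V ⊕ Option A))) : PTree V (Option A) → Prop
  | leaf (a : Option A) : IsDeriv D (.leaf a)
  | node (X : V) (ts : List (PTree V (Option A))) :
      (X, ts.map rootLabel) ∈ D → (∀ t ∈ ts, IsDeriv D t) → IsDeriv D (.node X ts)

/-- The set `Trees(G)` of derivation trees of `G`. -/
def TreesSet (G : CFG V A) : Set (PTree V (Option A)) :=
  {T | T.rootLabel = .inl G.start ∧ IsDeriv G.rules T}

/-- The language of `G`: yields of derivation trees. -/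
def lang (G : CFG V A) : Set (List A) := PTree.yield '' TreesSet G

/-- An adjunct tree is represented by its root nonterminal `X` together with a tree
over `V, A ∪ {X}` (the distinguished leaf `X` being the hole). -/
abbrev AdjT (V A : Type) := V × PTree V (Aug A)

/-- Wellformedness of an adjunct tree: root node labeled `X`, exactly one `X`-leaf. -/
def WFAdjunct (p : AdjT V A) : Prop :=
  (∃ ts, p.2 = PTree.node p.1 ts) ∧ p.2.holes = 1

/-- A simple adjunct tree: no nonterminal repeats on paths from a child of the root. -/
def SimpleAdjunct (p : AdjT V A) : Prop :=
  ∃ ts, p.2 = PTree.node p.1 ts ∧ ∀ t ∈ ts, Simple t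

/-- Root label of a subtree of an adjunct tree with root nonterminal `X`:
the hole leaf is labeled `X`. -/
def augRoot (X : V) : PTree V (Aug A) → V ⊕ Option A
  | .leaf (.inl a) => .inr a
  | .leaf (.inr _) => .inl X
  | .node Y _ => .inl Y

/-- An adjunct tree is extracted from derivation trees of `D`: every internal
node respects the rules. -/
inductive IsDerivA (D : Set (V × List (V ⊕ Option A))) (X : V) : PTree V (Aug A) → Prop
  | leaf (a : Aug A) : IsDerivA D X (.leaf a)
  | node (Y : V) (ts : List (PTree V (Aug A))) :
      (Y, ts.map (augRoot X)) ∈ D → (∀ t ∈ ts, IsDerivA D X t) → IsDerivA D X (.node Y ts)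

/-- `T ⊢_α T'` : `T'` is obtained from `T` by adjoining the adjunct tree `α`
at some occurrence of its root nonterminal. -/
def Adjoins (α : AdjT V A) (T T' : PTree V (Option A)) : Prop :=
  WFAdjunct α ∧
  ∃ (C : PTree V (Aug A)) (ts : List (PTree V (Option A))),
    C.holes = 1 ∧
    subst (.node α.1 ts) C = T ∧
    subst (subst (.node α.1 ts) α.2) C = T'

/-- `AdjChain L T T'` : `T'` is obtained from `T` by successively adjoining
the adjunct trees listed in `L`. -/
def AdjChain : List (AdjT V A) → PTree V (Option A) → PTree V (Option A) → Prop
  | [], T, T' => T = T'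
  | α :: L, T, T' => ∃ T₁, Adjoins α T T₁ ∧ AdjChain L T₁ T'

/-- `Adj⁺(T,S)` : trees obtained from `T` using exactly the adjunct trees of `S`,
each at least once. -/
def AdjPlus (T : PTree V (Option A)) (S : Set (AdjT V A)) : Set (PTree V (Option A)) :=
  {T' | ∃ L : List (AdjT V A), AdjChain L T T' ∧ {α | α ∈ L} = S}

/-- `Adj(T,S)` : trees obtained from `T` using adjunct trees of `S`, arbitrarily often. -/
def AdjStar (T : PTree V (Option A)) (S : Set (AdjT V A)) : Set (PTree V (Option A)) :=
  {T' | ∃ L : List (AdjT V A), AdjChain L T T' ∧ {α | α ∈ L} ⊆ S}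

namespace PTree
variable [DecidableEq V]

mutual
/-- Find the leftmost `X`-rooted subtree: returns the surrounding context
(with a hole in its place) and the subtree. -/
def extract (X : V) : PTree V (Option A) → Option (PTree V (Aug A) × PTree V (Option A))
  | .leaf _ => none
  | .node Y ts =>
    if Y = X then some (.leaf (.inr ()), .node Y ts)
    else match extractL X ts with
      | none => none
      | some (Cs, sub) => some (.node Y Cs, sub)

/-- List version of `extract`. -/
def extractL (X : V) : List (PTree V (Option A)) → Option (List (PTree V (Aug A)) × PTree V (Option A))
  | [] => none
  | t :: ts =>
    match extract X t with
    | some (C, sub) => some (C :: ts.map toAug, sub)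
    | none =>
      match extractL X ts with
      | some (Cs, sub) => some (toAug t :: Cs, sub)
      | none => none
end

/-- Takahashi's decomposition of a tree into a simple tree and a set of
simple adjunct trees. -/
def decomp : PTree V (Option A) → PTree V (Option A) × Set (AdjT V A)
  | .leaf a => (.leaf a, ∅)
  | .node X ts =>
    let rs := ts.attach.map (fun ⟨t, _⟩ => decomp t)
    let S := (rs.map Prod.snd).foldr (· ∪ ·) ∅
    match extractL X (rs.map Prod.fst) with
    | none => (.node X (rs.map Prod.fst), S)
    | some (Cs, sub) => (sub, insert (X, PTree.node X Cs) S)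

end PTree

/-- The simple trees arising from decompositions of derivation trees. -/
def sTrees (G : CFG V A) [DecidableEq V] : Set (PTree V (Option A)) :=
  {T' | ∃ T ∈ TreesSet G, (decomp T).1 = T'}

/-- The simple adjunct trees arising from decompositions of derivation trees. -/
def sLoops (G : CFG V A) [DecidableEq V] : Set (AdjT V A) :=
  {α | ∃ T ∈ TreesSet G, α ∈ (decomp T).2}

/-- Parikh map. -/
def parikh [DecidableEq A] (w : List A) : A → ℕ := fun a => w.count a

/-- Linear subsets of `ℕ^A`. -/
def IsLinear (S : Set (A → ℕ)) : Prop :=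
  ∃ (v₀ : A → ℕ) (k : ℕ) (v : Fin k → A → ℕ),
    S = {u | ∃ x : Fin k → ℕ, u = v₀ + ∑ i, x i • v i}

/-- Semilinear subsets of `ℕ^A`: finite unions of linear sets. -/
def IsSemilinear (S : Set (A → ℕ)) : Prop :=
  ∃ (n : ℕ) (f : Fin n → Set (A → ℕ)), (∀ i, IsLinear (f i)) ∧ S = ⋃ i, f i
section Work
variable {V A L : Type}
open PTree

theorem PTree.ind {P : PTree V L → Prop} (hleaf : ∀ a, P (.leaf a))
    (hnode : ∀ X ts, (∀ t ∈ ts, P t) → P (.node X ts)) : ∀ t, P t := by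
  intro t
  induction t using PTree.rec (motive_2 := fun l => ∀ t ∈ l, P t) with
  | leaf a => exact hleaf a
  | node X ts ih => exact hnode X ts ih
  | nil => simp_all
  | cons t ts iht ihts =>
    rename_i u hu
    rcases List.mem_cons.1 hu with h | h
    · exact h ▸ iht
    · exact ihts u h

@[simp] theorem PTree.subst_node (T : PTree V (Option A)) (X : V) (ts : List (PTree V (Aug A))) :
    subst T (.node X ts) = .node X (ts.map (subst T)) := by
  simp [subst]

@[simp] theorem PTree.toAug_node (X : V) (ts : List (PTree V (Option A))) :
    (PTree.node X ts).toAug = .node X (ts.map toAug) := by simp [toAug]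

@[simp] theorem PTree.holes_node (X : V) (ts : List (PTree V (Aug A))) :
    (PTree.node X ts).holes = (ts.map holes).sum := by simp [holes]

@[simp] theorem PTree.ntSet_node (X : V) (ts : List (PTree V L)) :
    (PTree.node X ts).ntSet = insert X ((ts.map ntSet).foldr (· ∪ ·) ∅) := by
  simp [ntSet]

@[simp] theorem PTree.holes_toAug (t : PTree V (Option A)) : t.toAug.holes = 0 := by
  induction t using PTree.ind with
  | hleaf a => simp [toAug, holes]
  | hnode X ts ih =>
    simp only [toAug_node, holes_node, List.map_map]
    rw [List.sum_eq_zero]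
    intro x hx
    simp only [List.mem_map, Function.comp] at hx
    obtain ⟨t, ht, rfl⟩ := hx
    exact ih t ht

@[simp] theorem PTree.subst_toAug (U : PTree V (Option A)) (t : PTree V (Option A)) :
    subst U t.toAug = t := by
  induction t using PTree.ind with
  | hleaf a => simp [toAug, subst]
  | hnode X ts ih =>
    simp only [toAug_node, subst_node, List.map_map]
    conv_rhs => rw [← List.map_id ts]
    exact congrArg _ (List.map_congr_left (fun t ht => ih t ht))

@[simp] theorem PTree.ntSet_toAug (t : PTree V (Option A)) : (toAug t).ntSet = t.ntSet := by
  induction t using PTree.ind with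
  | hleaf a => simp [toAug, ntSet]
  | hnode X ts ih =>
    simp only [toAug_node, ntSet_node, List.map_map]
    congr 2
    apply List.map_congr_left
    intro t ht
    exact ih t ht

@[simp] theorem PTree.augRoot_toAug (X : V) (t : PTree V (Option A)) :
    augRoot X (toAug t) = rootLabel t := by
  cases t <;> simp [toAug, augRoot, rootLabel]

theorem PTree.simple_toAug {t : PTree V (Option A)} : Simple (toAug t) ↔ Simple t := by
  induction t using PTree.ind with
  | hleaf a => simp [toAug, Simple]
  | hnode X ts ih =>
    simp only [toAug_node, Simple]
    constructor
    · intro h t ht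
      obtain ⟨h1, h2⟩ := h (toAug t) (List.mem_map_of_mem ht)
      rw [ntSet_toAug] at h1
      exact ⟨h1, (ih t ht).1 h2⟩
    · intro h u hu
      simp only [List.mem_map] at hu
      obtain ⟨t, ht, rfl⟩ := hu
      obtain ⟨h1, h2⟩ := h t ht
      exact ⟨by rwa [ntSet_toAug], (ih t ht).2 h2⟩

end Work
section Work2
variable {V A : Type}
open PTree

theorem PTree.rootLabel_subst {U : PTree V (Option A)} {X : V}
    (hU : rootLabel U = .inl X) (C : PTree V (Aug A)) :
    rootLabel (subst U C) = augRoot X C := by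
  match C with
  | .leaf (.inl a) => simp [subst, augRoot, rootLabel]
  | .leaf (.inr _) => simp [subst, augRoot, hU]
  | .node Y ts => simp [subst, augRoot, rootLabel]

theorem isDeriv_node_iff {D : Set (V × List (V ⊕ Option A))} {X : V}
    {ts : List (PTree V (Option A))} :
    IsDeriv D (.node X ts) ↔ (X, ts.map rootLabel) ∈ D ∧ ∀ t ∈ ts, IsDeriv D t := by
  constructor
  · intro h; cases h with | node _ _ h1 h2 => exact ⟨h1, h2⟩
  · intro ⟨h1, h2⟩; exact .node X ts h1 h2

/-- Lemma A: extract `IsDerivA` of the context from a derivation of the substituted tree. -/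
theorem isDerivA_of_subst {D : Set (V × List (V ⊕ Option A))} {U : PTree V (Option A)} {X : V}
    (hU : rootLabel U = .inl X) :
    ∀ C : PTree V (Aug A), IsDeriv D (subst U C) → IsDerivA D X C := by
  intro C
  induction C using PTree.ind with
  | hleaf a => intro _; exact .leaf a
  | hnode Y cs ih =>
    intro h
    rw [subst_node, isDeriv_node_iff] at h
    refine .node Y cs ?_ (fun c hc => ih c hc (h.2 _ (List.mem_map_of_mem hc)))
    have : cs.map (augRoot X) = (cs.map (subst U)).map rootLabel := by
      rw [List.map_map]
      exact List.map_congr_left (fun c _ => (rootLabel_subst hU c).symm)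
    rw [this]; exact h.1

/-- Lemma B: recover the derivation of the plugged tree. -/
theorem isDeriv_of_subst {D : Set (V × List (V ⊕ Option A))} {U : PTree V (Option A)} :
    ∀ C : PTree V (Aug A), 1 ≤ C.holes → IsDeriv D (subst U C) → IsDeriv D U := by
  intro C
  induction C using PTree.ind with
  | hleaf a =>
    match a with
    | .inl a => intro h; simp [holes] at h
    | .inr _ => intro _ h; simpa [subst] using h
  | hnode Y cs ih =>
    intro hh h
    rw [holes_node] at hh
    have : ∃ c ∈ cs, 1 ≤ c.holes := by
      by_contra hcon
      push_neg at hcon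
      have : (cs.map holes).sum = 0 := by
        rw [List.sum_eq_zero]
        intro x hx
        obtain ⟨c, hc, rfl⟩ := List.mem_map.1 hx
        exact Nat.lt_one_iff.mp (hcon c hc)
      omega
    obtain ⟨c, hc, hc1⟩ := this
    rw [subst_node, isDeriv_node_iff] at h
    exact ih c hc hc1 (h.2 _ (List.mem_map_of_mem hc))

/-- Lemma C: substitution preserves derivations. -/
theorem isDeriv_subst {D : Set (V × List (V ⊕ Option A))} {U : PTree V (Option A)} {X : V}
    (hU : rootLabel U = .inl X) (hDU : IsDeriv D U) :
    ∀ C : PTree V (Aug A), IsDerivA D X C → IsDeriv D (subst U C) := by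
  intro C
  induction C using PTree.ind with
  | hleaf a =>
    intro _
    match a with
    | .inl a => simpa [subst] using IsDeriv.leaf (D := D) a
    | .inr _ => simpa [subst] using hDU
  | hnode Y cs ih =>
    intro h
    cases h with
    | node _ _ h1 h2 =>
      rw [subst_node, isDeriv_node_iff]
      refine ⟨?_, ?_⟩
      · have : (cs.map (subst U)).map rootLabel = cs.map (augRoot X) := by
          rw [List.map_map]
          exact List.map_congr_left (fun c _ => rootLabel_subst hU c)
        rw [this]; exact h1
      · intro u hu
        obtain ⟨c, hc, rfl⟩ := List.mem_map.1 hu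
        exact ih c hc (h2 c hc)

theorem isDerivA_toAug {D : Set (V × List (V ⊕ Option A))} {X : V} :
    ∀ {t : PTree V (Option A)}, IsDeriv D t → IsDerivA D X (toAug t) := by
  intro t
  induction t using PTree.ind with
  | hleaf a =>
    intro _
    have h : toAug (PTree.leaf (V := V) a) = .leaf (.inl a) := by simp [toAug]
    rw [h]; exact .leaf _
  | hnode Y ts ih =>
    intro h
    rw [isDeriv_node_iff] at h
    rw [toAug_node]
    refine .node Y _ ?_ ?_
    · rw [List.map_map]
      have : (augRoot X ∘ toAug (A := A) (V := V)) = rootLabel := by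
        funext t; exact augRoot_toAug X t
      rw [this]; exact h.1
    · intro u hu
      obtain ⟨c, hc, rfl⟩ := List.mem_map.1 hu
      exact ih c hc (h.2 c hc)

end Work2
section Work3
variable {V A : Type}
open PTree

/-- One adjoining step preserves derivations and the root label. -/
theorem adjoins_preserves {D : Set (V × List (V ⊕ Option A))} {α : AdjT V A}
    {T0 T1 : PTree V (Option A)} (hadj : Adjoins α T0 T1)
    (hα : IsDerivA D α.1 α.2) (h0 : IsDeriv D T0) :
    IsDeriv D T1 ∧ rootLabel T1 = rootLabel T0 := by
  obtain ⟨hwf, C, ts, hC1, h2, h3⟩ := hadj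
  obtain ⟨⟨cs, hcs⟩, _⟩ := hwf
  set U : PTree V (Option A) := .node α.1 ts with hUdef
  have hUroot : rootLabel U = .inl α.1 := rfl
  have hDU : IsDeriv D U := isDeriv_of_subst C (by omega) (h2 ▸ h0)
  have hDC : IsDerivA D α.1 C := isDerivA_of_subst hUroot C (h2 ▸ h0)
  have hU' : IsDeriv D (subst U α.2) := isDeriv_subst hUroot hDU α.2 hα
  have hU'root : rootLabel (subst U α.2) = .inl α.1 := by
    rw [hcs]; simp [rootLabel]
  constructor
  · rw [← h3]; exact isDeriv_subst hU'root hU' C hDC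
  · rw [← h3, ← h2, rootLabel_subst hUroot C, rootLabel_subst hU'root C]

/-- Lift an adjoining step into a context. -/
theorem adjoins_context {α : AdjT V A} {U U' : PTree V (Option A)}
    (X : V) (pre post : List (PTree V (Option A))) (h : Adjoins α U U') :
    Adjoins α (.node X (pre ++ U :: post)) (.node X (pre ++ U' :: post)) := by
  obtain ⟨hwf, C, ts, hC1, h2, h3⟩ := h
  refine ⟨hwf, .node X (pre.map toAug ++ C :: post.map toAug), ts, ?_, ?_, ?_⟩
  · have hz : ∀ (l : List (PTree V (Option A))), (l.map (holes ∘ toAug)).sum = 0 := by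
      intro l
      rw [List.sum_eq_zero]
      intro x hx
      obtain ⟨t, _, rfl⟩ := List.mem_map.1 hx
      exact holes_toAug t
    simp only [holes_node, List.map_append, List.map_cons, List.map_map, List.sum_append,
      List.sum_cons, hC1, hz]
  · simp only [subst_node, List.map_append, List.map_cons, List.map_map]
    rw [h2]
    have e1 : List.map ((node α.1 ts).subst ∘ toAug) pre = pre := by
      conv_rhs => rw [← List.map_id pre]
      exact List.map_congr_left (fun t _ => subst_toAug _ t)
    have e2 : List.map ((node α.1 ts).subst ∘ toAug) post = post := by
      conv_rhs => rw [← List.map_id post]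
      exact List.map_congr_left (fun t _ => subst_toAug _ t)
    simp only [e1, e2, h2]
  · simp only [subst_node, List.map_append, List.map_cons, List.map_map]
    have e1 : List.map (((node α.1 ts).subst α.2).subst ∘ toAug) pre = pre := by
      conv_rhs => rw [← List.map_id pre]
      exact List.map_congr_left (fun t _ => subst_toAug _ t)
    have e2 : List.map (((node α.1 ts).subst α.2).subst ∘ toAug) post = post := by
      conv_rhs => rw [← List.map_id post]
      exact List.map_congr_left (fun t _ => subst_toAug _ t)
    simp only [e1, e2, h3]

theorem adjChain_append {L1 L2 : List (AdjT V A)} {T0 T1 T2 : PTree V (Option A)}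
    (h1 : AdjChain L1 T0 T1) (h2 : AdjChain L2 T1 T2) : AdjChain (L1 ++ L2) T0 T2 := by
  induction L1 generalizing T0 with
  | nil => rw [show T0 = T1 from h1]; exact h2
  | cons α L ih =>
    obtain ⟨Tm, ha, hc⟩ := h1
    exact ⟨Tm, ha, ih hc⟩

theorem adjChain_context {L : List (AdjT V A)} {U U' : PTree V (Option A)}
    (X : V) (pre post : List (PTree V (Option A))) (h : AdjChain L U U') :
    AdjChain L (.node X (pre ++ U :: post)) (.node X (pre ++ U' :: post)) := by
  induction L generalizing U with
  | nil => rw [show U = U' from h]; rfl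
  | cons α L ih =>
    obtain ⟨Tm, ha, hc⟩ := h
    exact ⟨_, adjoins_context X pre post ha, ih hc⟩

end Work3
section Work4
set_option linter.unusedSectionVars false
variable {V A : Type} [DecidableEq V]
open PTree

theorem mem_foldr_union {l : List (Set V)} {x : V} :
    x ∈ l.foldr (· ∪ ·) ∅ ↔ ∃ s ∈ l, x ∈ s := by
  induction l with
  | nil => simp
  | cons s l ih => simp [ih]

theorem mem_ntSet_node {X x : V} {ts : List (PTree V L)} :
    x ∈ (PTree.node X ts).ntSet ↔ x = X ∨ ∃ t ∈ ts, x ∈ t.ntSet := by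
  simp only [ntSet_node, Set.mem_insert_iff]
  rw [mem_foldr_union]
  simp

/-- The full specification of a successful `extract`. -/
def ExtractP (X : V) (t : PTree V (Option A)) : Prop :=
  ∀ C sub, extract X t = some (C, sub) →
    C.holes = 1 ∧ subst sub C = t ∧ augRoot X C = rootLabel t ∧
    (∃ ss, sub = PTree.node X ss) ∧
    ntSet C ⊆ ntSet t ∧ (Simple t → Simple C ∧ Simple sub) ∧
    (∀ D : Set (V × List (V ⊕ Option A)), IsDeriv D t → IsDerivA D X C ∧ IsDeriv D sub)

theorem extractL_spec_aux {X : V} {ts : List (PTree V (Option A))}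
    (IH : ∀ t ∈ ts, ExtractP X t) :
    ∀ Cs sub, extractL X ts = some (Cs, sub) →
      (Cs.map holes).sum = 1 ∧ Cs.map (subst sub) = ts ∧
      Cs.map (augRoot X) = ts.map rootLabel ∧
      (∃ ss, sub = PTree.node X ss) ∧
      (∀ C ∈ Cs, ∃ t ∈ ts, ntSet C ⊆ ntSet t ∧ (Simple t → Simple C)) ∧
      ((∀ t ∈ ts, Simple t) → Simple sub) ∧
      (∀ D : Set (V × List (V ⊕ Option A)), (∀ t ∈ ts, IsDeriv D t) →
        (∀ C ∈ Cs, IsDerivA D X C) ∧ IsDeriv D sub) := by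
  induction ts with
  | nil => intro Cs sub h; rw [extractL] at h; exact absurd h (by simp)
  | cons t ts ih =>
    intro Cs sub h
    rw [extractL] at h
    match he : extract X t with
    | some (C, s) =>
      rw [he] at h
      simp only [Option.some.injEq, Prod.mk.injEq] at h
      obtain ⟨he1, he2⟩ := h
      subst he1; subst he2
      obtain ⟨h1, h2, h3, h4, h5, h6, h7⟩ := IH t (by simp) C s he
      refine ⟨?_, ?_, ?_, h4, ?_, ?_, ?_⟩
      · simp only [List.map_cons, List.sum_cons, List.map_map, h1]
        have : ((ts.map toAug).map holes).sum = 0 := by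
          rw [List.sum_eq_zero]; intro x hx
          obtain ⟨u, hu, rfl⟩ := List.mem_map.1 hx
          obtain ⟨r, _, rfl⟩ := List.mem_map.1 hu
          exact holes_toAug r
        rw [List.map_map] at this
        omega
      · simp only [List.map_cons, h2, List.map_map, List.cons.injEq, true_and]
        conv_rhs => rw [← List.map_id ts]
        exact List.map_congr_left (fun r _ => subst_toAug _ r)
      · simp only [List.map_cons, h3, List.map_map, List.cons.injEq, true_and]
        exact List.map_congr_left (fun r _ => augRoot_toAug X r)
      · intro C' hC'
        rcases List.mem_cons.1 hC' with rfl | hC'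
        · exact ⟨t, by simp, h5, fun hs => (h6 hs).1⟩
        · obtain ⟨r, hr, rfl⟩ := List.mem_map.1 hC'
          exact ⟨r, by simp [hr], by rw [ntSet_toAug], fun hs => simple_toAug.2 hs⟩
      · intro hs
        exact (h6 (hs t (by simp))).2
      · intro D hD
        refine ⟨?_, (h7 D (hD t (by simp))).2⟩
        intro C' hC'
        rcases List.mem_cons.1 hC' with rfl | hC'
        · exact (h7 D (hD t (by simp))).1
        · obtain ⟨r, hr, rfl⟩ := List.mem_map.1 hC'
          exact isDerivA_toAug (hD r (by simp [hr]))
    | none =>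
      rw [he] at h
      match he2 : extractL X ts with
      | none => rw [he2] at h; exact absurd h (by simp)
      | some (Cs', s) =>
        rw [he2] at h
        simp only [Option.some.injEq, Prod.mk.injEq] at h
        obtain ⟨he1, he2⟩ := h
        subst he1; subst he2
        obtain ⟨h1, h2, h3, h4, h5, h6, h7⟩ :=
          ih (fun u hu => IH u (by simp [hu])) Cs' s he2
        refine ⟨?_, ?_, ?_, h4, ?_, ?_, ?_⟩
        · simp [h1, holes_toAug]
        · simp only [List.map_cons, h2, List.cons.injEq, and_true]
          exact subst_toAug _ t
        · simp only [List.map_cons, h3, List.cons.injEq, and_true]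
          exact augRoot_toAug X t
        · intro C' hC'
          rcases List.mem_cons.1 hC' with rfl | hC'
          · exact ⟨t, by simp, by rw [ntSet_toAug], fun hs => simple_toAug.2 hs⟩
          · obtain ⟨r, hr, hsub, hsimp⟩ := h5 C' hC'
            exact ⟨r, by simp [hr], hsub, hsimp⟩
        · intro hs
          exact h6 (fun u hu => hs u (by simp [hu]))
        · intro D hD
          obtain ⟨ha, hb⟩ := h7 D (fun u hu => hD u (by simp [hu]))
          refine ⟨?_, hb⟩
          intro C' hC'
          rcases List.mem_cons.1 hC' with rfl | hC'
          · exact isDerivA_toAug (hD t (by simp))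
          · exact ha C' hC'

theorem extract_spec (X : V) : ∀ t : PTree V (Option A), ExtractP X t := by
  intro t
  induction t using PTree.ind with
  | hleaf a => intro C sub h; rw [extract] at h; exact absurd h (by simp)
  | hnode Y ts IH =>
    intro C sub h
    rw [extract] at h
    by_cases hYX : Y = X
    · subst hYX
      simp only [if_pos rfl, Option.some.injEq, Prod.mk.injEq] at h
      obtain ⟨rfl, rfl⟩ := h
      refine ⟨by simp [holes], by simp [subst], by simp [augRoot, rootLabel], ⟨ts, rfl⟩,
        by simp [ntSet], fun hs => ⟨by simp [Simple], hs⟩, fun D hD => ⟨.leaf _, hD⟩⟩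
    · rw [if_neg hYX] at h
      match he : extractL X ts with
      | none => rw [he] at h; exact absurd h (by simp)
      | some (Cs, s) =>
        rw [he] at h
        simp only [Option.some.injEq, Prod.mk.injEq] at h
        obtain ⟨he1, he2⟩ := h
        subst he1; subst he2
        obtain ⟨h1, h2, h3, h4, h5, h6, h7⟩ := extractL_spec_aux IH Cs s he
        refine ⟨by simp [h1], by simp [h2], by simp [augRoot, rootLabel], h4, ?_, ?_, ?_⟩
        · intro x hx
          rcases mem_ntSet_node.1 hx with rfl | ⟨C', hC', hxC⟩
          · exact mem_ntSet_node.2 (Or.inl rfl)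
          · obtain ⟨r, hr, hsub, _⟩ := h5 C' hC'
            exact mem_ntSet_node.2 (Or.inr ⟨r, hr, hsub hxC⟩)
        · intro hs
          simp only [Simple] at hs ⊢
          refine ⟨?_, h6 (fun u hu => (hs u hu).2)⟩
          intro C' hC'
          obtain ⟨r, hr, hsub, hsimp⟩ := h5 C' hC'
          exact ⟨fun hY => (hs r hr).1 (hsub hY), hsimp (hs r hr).2⟩
        · intro D hD
          rw [isDeriv_node_iff] at hD
          obtain ⟨ha, hb⟩ := h7 D hD.2
          refine ⟨.node Y Cs (by rw [h3]; exact hD.1) ha, hb⟩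

theorem extractL_eq_none {X : V} {ts : List (PTree V (Option A))}
    (h : extractL X ts = none) : ∀ t ∈ ts, extract X t = none := by
  induction ts with
  | nil => simp
  | cons t ts ih =>
    rw [extractL] at h
    match he : extract X t with
    | some (C, s) => rw [he] at h; exact absurd h (by simp)
    | none =>
      rw [he] at h
      match he2 : extractL X ts with
      | some (Cs, s) => rw [he2] at h; exact absurd h (by simp)
      | none =>
        intro u hu
        rcases List.mem_cons.1 hu with rfl | hu
        · exact he
        · exact ih he2 u hu

theorem extract_eq_none {X : V} : ∀ {t : PTree V (Option A)},
    extract X t = none → X ∉ t.ntSet := by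
  intro t
  induction t using PTree.ind with
  | hleaf a => intro _; simp [ntSet]
  | hnode Y ts IH =>
    intro h hX
    rw [extract] at h
    by_cases hYX : Y = X
    · rw [if_pos hYX] at h; exact absurd h (by simp)
    · rw [if_neg hYX] at h
      match he : extractL X ts with
      | some (Cs, s) => rw [he] at h; exact absurd h (by simp)
      | none =>
        rcases mem_ntSet_node.1 hX with rfl | ⟨t, ht, hXt⟩
        · exact hYX rfl
        · exact IH t ht (extractL_eq_none he t ht) hXt

end Work4
section Work5
set_option linter.unusedSectionVars false
variable {V A : Type} [DecidableEq V]
open PTree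

theorem decomp_leaf (a : Option A) : decomp (PTree.leaf (V := V) a) = (.leaf a, ∅) := by
  rw [decomp]

theorem decomp_node (X : V) (ts : List (PTree V (Option A))) :
    decomp (PTree.node X ts) =
      match extractL X (ts.map (fun t => (decomp t).1)) with
      | none => (.node X (ts.map (fun t => (decomp t).1)),
          (ts.map (fun t => (decomp t).2)).foldr (· ∪ ·) ∅)
      | some (Cs, sub) => (sub,
          insert (X, PTree.node X Cs) ((ts.map (fun t => (decomp t).2)).foldr (· ∪ ·) ∅)) := by
  rw [decomp]
  simp only [List.map_subtype, List.map_map, List.unattach_attach]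
  rfl
end Work5
section Work5b
set_option linter.unusedSectionVars false
variable {V A : Type} [DecidableEq V]
open PTree

theorem mem_foldr_union' {β : Type} {l : List (Set β)} {x : β} :
    x ∈ l.foldr (· ∪ ·) ∅ ↔ ∃ s ∈ l, x ∈ s := by
  induction l with
  | nil => simp
  | cons s l ih => simp [ih]

theorem chain_children (X : V) :
    ∀ (ts : List (PTree V (Option A))),
    (∀ t ∈ ts, ∃ L : List (AdjT V A), AdjChain L (decomp t).1 t ∧ {α | α ∈ L} = (decomp t).2) →
    ∀ pre : List (PTree V (Option A)),
      ∃ M : List (AdjT V A),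
        AdjChain M (.node X (pre ++ ts.map (fun t => (decomp t).1))) (.node X (pre ++ ts)) ∧
        {α | α ∈ M} = (ts.map (fun t => (decomp t).2)).foldr (· ∪ ·) ∅ := by
  intro ts
  induction ts with
  | nil =>
    intro _ pre
    refine ⟨[], ?_, by ext β; simp⟩
    show PTree.node X _ = PTree.node X _
    rfl
  | cons t ts ih =>
    intro H pre
    obtain ⟨L, hL, hLs⟩ := H t (by simp)
    obtain ⟨M, hM, hMs⟩ := ih (fun u hu => H u (by simp [hu])) (pre ++ [t])
    refine ⟨L ++ M, ?_, ?_⟩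
    · have c1 : AdjChain L (.node X (pre ++ (decomp t).1 :: ts.map (fun t => (decomp t).1)))
          (.node X (pre ++ t :: ts.map (fun t => (decomp t).1))) :=
        adjChain_context X pre _ hL
      have e1 : pre ++ [t] ++ ts.map (fun t => (decomp t).1)
          = pre ++ t :: ts.map (fun t => (decomp t).1) := by simp
      have e2 : pre ++ [t] ++ ts = pre ++ t :: ts := by simp
      rw [e1, e2] at hM
      have := adjChain_append c1 hM
      simpa using this
    · ext β
      have l1 := Set.ext_iff.1 hLs β
      have l2 := Set.ext_iff.1 hMs β
      simp only [Set.mem_setOf_eq] at l1 l2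
      simp only [Set.mem_setOf_eq, List.mem_append, List.map_cons, List.foldr_cons,
        Set.mem_union, l1, l2]

theorem adjChain_trees {D : Set (V × List (V ⊕ Option A))} :
    ∀ (L : List (AdjT V A)) (T0 T1 : PTree V (Option A)), AdjChain L T0 T1 →
    (∀ α ∈ L, IsDerivA D α.1 α.2) → IsDeriv D T0 →
    IsDeriv D T1 ∧ rootLabel T1 = rootLabel T0 := by
  intro L
  induction L with
  | nil => intro T0 T1 h _ h0; rw [show T0 = T1 from h] at *; exact ⟨h0, rfl⟩
  | cons α L ih =>
    intro T0 T1 h hA h0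
    obtain ⟨Tm, ha, hc⟩ := h
    obtain ⟨hm, hmr⟩ := adjoins_preserves ha (hA α (by simp)) h0
    obtain ⟨h1, h1r⟩ := ih Tm T1 hc (fun β hβ => hA β (by simp [hβ])) hm
    exact ⟨h1, h1r.trans hmr⟩

theorem decomp_spec {D : Set (V × List (V ⊕ Option A))} :
    ∀ T : PTree V (Option A), IsDeriv D T →
      rootLabel (decomp T).1 = rootLabel T ∧ (decomp T).1.Simple ∧ IsDeriv D (decomp T).1 ∧
      (∀ α ∈ (decomp T).2, WFAdjunct α ∧ SimpleAdjunct α ∧ IsDerivA D α.1 α.2) ∧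
      ∃ L : List (AdjT V A), AdjChain L (decomp T).1 T ∧ {α | α ∈ L} = (decomp T).2 := by
  intro T
  induction T using PTree.ind with
  | hleaf a =>
    intro _
    rw [decomp_leaf]
    refine ⟨rfl, by simp [Simple], .leaf a, by simp, [], rfl, by ext β; simp⟩
  | hnode X ts IH =>
    intro hT
    rw [isDeriv_node_iff] at hT
    obtain ⟨hrule, hts⟩ := hT
    have IH' := fun t ht => IH t ht (hts t ht)
    -- facts about the list of decomposed children
    have hroots : (ts.map (fun t => (decomp t).1)).map rootLabel = ts.map rootLabel := by
      rw [List.map_map]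
      exact List.map_congr_left (fun t ht => (IH' t ht).1)
    have hsimp : ∀ u ∈ ts.map (fun t => (decomp t).1), u.Simple := by
      intro u hu; obtain ⟨t, ht, rfl⟩ := List.mem_map.1 hu; exact (IH' t ht).2.1
    have hder : ∀ u ∈ ts.map (fun t => (decomp t).1), IsDeriv D u := by
      intro u hu; obtain ⟨t, ht, rfl⟩ := List.mem_map.1 hu; exact (IH' t ht).2.2.1
    have hSmem : ∀ α ∈ (ts.map (fun t => (decomp t).2)).foldr (· ∪ ·) ∅,
        WFAdjunct α ∧ SimpleAdjunct α ∧ IsDerivA D α.1 α.2 := by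
      intro α hα
      obtain ⟨s, hs, hαs⟩ := mem_foldr_union'.1 hα
      obtain ⟨t, ht, rfl⟩ := List.mem_map.1 hs
      exact (IH' t ht).2.2.2.1 α hαs
    rw [decomp_node]
    match he : extractL X (ts.map (fun t => (decomp t).1)) with
    | none =>
      refine ⟨rfl, ?_, ?_, hSmem, ?_⟩
      · show Simple (PTree.node X _)
        simp only [Simple]
        intro u hu
        obtain ⟨t, ht, rfl⟩ := List.mem_map.1 hu
        refine ⟨extract_eq_none (extractL_eq_none he _ (List.mem_map_of_mem ht)), (IH' t ht).2.1⟩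
      · exact .node X _ (by rw [hroots]; exact hrule) hder
      · obtain ⟨M, hM, hMs⟩ := chain_children X ts
          (fun t ht => (IH' t ht).2.2.2.2) []
        simp only [List.nil_append] at hM
        exact ⟨M, hM, hMs⟩
    | some (Cs, sub) =>
      obtain ⟨h1, h2, h3, h4, h5, h6, h7⟩ :=
        extractL_spec_aux (fun u _ => extract_spec X u) Cs sub he
      obtain ⟨ss, hss⟩ := h4
      have hsubderiv : IsDeriv D sub := (h7 D hder).2
      have hCsA : ∀ C ∈ Cs, IsDerivA D X C := (h7 D hder).1
      have hαA : IsDerivA D X (PTree.node X Cs) := by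
        refine .node X Cs ?_ hCsA
        rw [h3, hroots]; exact hrule
      have hαWF : WFAdjunct ((X, PTree.node X Cs) : AdjT V A) := by
        refine ⟨⟨Cs, rfl⟩, ?_⟩
        show (PTree.node X Cs).holes = 1
        rw [holes_node, h1]
      have hαS : SimpleAdjunct ((X, PTree.node X Cs) : AdjT V A) := by
        refine ⟨Cs, rfl, ?_⟩
        intro C hC
        obtain ⟨u, hu, _, hsC⟩ := h5 C hC
        exact hsC (hsimp u hu)
      refine ⟨?_, ?_, hsubderiv, ?_, ?_⟩
      · rw [hss]; rfl
      · exact h6 hsimp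
      · intro α hα
        rcases Set.mem_insert_iff.1 hα with rfl | hα
        · exact ⟨hαWF, hαS, hαA⟩
        · exact hSmem α hα
      · -- the adjoining chain
        obtain ⟨M, hM, hMs⟩ := chain_children X ts
          (fun t ht => (IH' t ht).2.2.2.2) []
        simp only [List.nil_append] at hM
        refine ⟨(X, PTree.node X Cs) :: M, ⟨.node X (ts.map (fun t => (decomp t).1)), ?_, hM⟩, ?_⟩
        · refine ⟨hαWF, .leaf (.inr ()), ss, by simp [holes], ?_, ?_⟩
          · rw [← hss]; simp [subst]
          · have e : ∀ (W : PTree V (Option A)), subst W (PTree.leaf (Sum.inr ())) = W :=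
              fun W => by simp [subst]
            rw [e, ← hss, subst_node, h2]
        · ext β
          have l2 := Set.ext_iff.1 hMs β
          simp only [Set.mem_setOf_eq] at l2
          simp only [Set.mem_setOf_eq, List.mem_cons, Set.mem_insert_iff, l2]

end Work5b

/-- Decomposition lemma: for `T ∈ Trees(G)` and `d(T) = (T', S)`:
(1) `T'` is a simple derivation tree; (2) every element of `S` is a simple adjunct
tree; (3) `T ∈ Adj⁺(T', S) ⊆ Trees(G)`. -/
theorem decomposition_lemma {V A : Type} [DecidableEq V] (G : CFG V A)
    (T : PTree V (Option A)) (hT : T ∈ TreesSet G) :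
    (PTree.decomp T).1.Simple ∧ (PTree.decomp T).1 ∈ TreesSet G ∧
    (∀ α ∈ (PTree.decomp T).2, WFAdjunct α ∧ SimpleAdjunct α) ∧
    T ∈ AdjPlus (PTree.decomp T).1 (PTree.decomp T).2 ∧
    AdjPlus (PTree.decomp T).1 (PTree.decomp T).2 ⊆ TreesSet G := by
  obtain ⟨hroot, hderiv⟩ := hT
  obtain ⟨h1, h2, h3, h4, L, hL, hLs⟩ := decomp_spec T hderiv
  refine ⟨h2, ⟨h1.trans hroot, h3⟩, fun α hα => ⟨(h4 α hα).1, (h4 α hα).2.1⟩,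
    ⟨L, hL, hLs⟩, ?_⟩
  intro T' hT'
  obtain ⟨L', hc, hset⟩ := hT'
  have hall : ∀ α ∈ L', IsDerivA G.rules α.1 α.2 := by
    intro α hα
    have : α ∈ (PTree.decomp T).2 := hset ▸ hα
    exact (h4 α this).2.2
  obtain ⟨hd, hr⟩ := adjChain_trees L' _ T' hc hall h3
  exact ⟨hr.trans (h1.trans hroot), hd⟩
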